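/- The excess cross-entropy risk of the optimal counterfactually fair classifier equals the conditional mutual information I(A; Y | U): under the invertible structural model with A ⊥ U and binary Y, E[ℓ_CE(φ_CF(X,A), Y)] - E[ℓ_CE(φ*(X,A), Y)] = I(A; Y | U), where ℓ_CE is binary cross-entropy. -/

import Mathlib

open MeasureTheory

section Aux

open Real

/-- convex combination of two positives is positive -/
lemma convex_pos {s t p1 p2 : ℝ} (hs : 0 ≤ s) (ht : 0 ≤ t) (hst : s + t = 1)
    (h1 : 0 < p1) (h2 : 0 < p2) : 0 < s * p1 + t * p2 := by
  have hm : 0 < min p1 p2 := lt_min h1 h2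
  calc (0:ℝ) < min p1 p2 := hm
    _ = s * min p1 p2 + t * min p1 p2 := by rw [← add_mul, hst, one_mul]
    _ ≤ s * p1 + t * p2 :=
      add_le_add (mul_le_mul_of_nonneg_left (min_le_left _ _) hs)
        (mul_le_mul_of_nonneg_left (min_le_right _ _) ht)

lemma convex_mem_Ioo {s t p1 p2 : ℝ} (hs : 0 ≤ s) (ht : 0 ≤ t) (hst : s + t = 1)
    (h1 : p1 ∈ Set.Ioo (0:ℝ) 1) (h2 : p2 ∈ Set.Ioo (0:ℝ) 1) :
    s * p1 + t * p2 ∈ Set.Ioo (0:ℝ) 1 := by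
  obtain ⟨a1, b1⟩ := h1; obtain ⟨a2, b2⟩ := h2
  refine ⟨convex_pos hs ht hst a1 a2, ?_⟩
  have h := convex_pos hs ht hst (by linarith : (0:ℝ) < 1 - p1) (by linarith : (0:ℝ) < 1 - p2)
  have hexp : s * (1 - p1) + t * (1 - p2) = 1 - (s * p1 + t * p2) := by
    linear_combination hst
  linarith [h, hexp]

lemma kl_nonneg {p q : ℝ} (hp : p ∈ Set.Ioo (0:ℝ) 1) (hq : q ∈ Set.Ioo (0:ℝ) 1) :
    0 ≤ p * Real.log (p / q) + (1 - p) * Real.log ((1 - p) / (1 - q)) := by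
  obtain ⟨hp0, hp1⟩ := hp; obtain ⟨hq0, hq1⟩ := hq
  have key1 : p - q ≤ p * Real.log (p / q) := by
    have h := Real.log_le_sub_one_of_pos (show 0 < q / p by positivity)
    have h' : p * Real.log (q / p) ≤ p * (q / p - 1) :=
      mul_le_mul_of_nonneg_left h hp0.le
    have hpq : p * (q / p - 1) = q - p := by field_simp
    have hlog : Real.log (p / q) = -Real.log (q / p) := by
      rw [← Real.log_inv, inv_div]
    rw [hlog]
    have : p * -Real.log (q / p) = -(p * Real.log (q / p)) := by ring
    rw [this]; linarith
  have key2 : q - p ≤ (1 - p) * Real.log ((1 - p) / (1 - q)) := by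
    have hq' : (0:ℝ) < 1 - q := by linarith
    have hp' : (0:ℝ) < 1 - p := by linarith
    have h := Real.log_le_sub_one_of_pos (div_pos hq' hp')
    have h' : (1 - p) * Real.log ((1 - q) / (1 - p)) ≤ (1 - p) * ((1 - q) / (1 - p) - 1) :=
      mul_le_mul_of_nonneg_left h (by linarith)
    have hpq : (1 - p) * ((1 - q) / (1 - p) - 1) = p - q := by
      field_simp
      ring
    have hlog : Real.log ((1 - p) / (1 - q)) = -Real.log ((1 - q) / (1 - p)) := by
      rw [← Real.log_inv, inv_div]
    rw [hlog]
    have : (1 - p) * -Real.log ((1 - q) / (1 - p)) = -((1 - p) * Real.log ((1 - q) / (1 - p))) := by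
      ring
    rw [this]; linarith
  linarith

lemma kl_le {p q c : ℝ} (hp : p ∈ Set.Ioo (0:ℝ) 1) (hq : q ∈ Set.Ioo (0:ℝ) 1)
    (hc : 0 < c) (h1 : c * p ≤ q) (h2 : c * (1 - p) ≤ 1 - q) :
    p * Real.log (p / q) + (1 - p) * Real.log ((1 - p) / (1 - q)) ≤ -Real.log c := by
  obtain ⟨hp0, hp1⟩ := hp; obtain ⟨hq0, hq1⟩ := hq
  have hp1' : (0:ℝ) < 1 - p := by linarith
  have hq1' : (0:ℝ) < 1 - q := by linarith
  have b1 : Real.log (p / q) ≤ -Real.log c := by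
    have hle : p / q ≤ 1 / c := by
      rw [div_le_div_iff₀ hq0 hc]; nlinarith
    have := (Real.log_le_log_iff (by positivity) (by positivity)).2 hle
    rwa [one_div, Real.log_inv] at this
  have b2 : Real.log ((1 - p) / (1 - q)) ≤ -Real.log c := by
    have hle : (1 - p) / (1 - q) ≤ 1 / c := by
      rw [div_le_div_iff₀ hq1' hc]; nlinarith
    have := (Real.log_le_log_iff (by positivity) (by positivity)).2 hle
    rwa [one_div, Real.log_inv] at this
  have m1 : p * Real.log (p / q) ≤ p * (-Real.log c) :=
    mul_le_mul_of_nonneg_left b1 hp0.le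
  have m2 : (1 - p) * Real.log ((1 - p) / (1 - q)) ≤ (1 - p) * (-Real.log c) :=
    mul_le_mul_of_nonneg_left b2 hp1'.le
  have : p * (-Real.log c) + (1 - p) * (-Real.log c) = -Real.log c := by ring
  linarith

lemma ent_nonneg {p : ℝ} (hp : p ∈ Set.Ioo (0:ℝ) 1) :
    0 ≤ -(p * Real.log p + (1 - p) * Real.log (1 - p)) := by
  obtain ⟨hp0, hp1⟩ := hp
  have h1 : Real.log p ≤ 0 := (Real.log_neg hp0 hp1).le
  have h2 : Real.log (1 - p) ≤ 0 := (Real.log_neg (by linarith) (by linarith)).le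
  nlinarith

lemma ent_le_one {p : ℝ} (hp : p ∈ Set.Ioo (0:ℝ) 1) :
    -(p * Real.log p + (1 - p) * Real.log (1 - p)) ≤ 1 := by
  obtain ⟨hp0, hp1⟩ := hp
  have h1 : Real.log p⁻¹ ≤ p⁻¹ - 1 := Real.log_le_sub_one_of_pos (by positivity)
  have h2 : Real.log (1 - p)⁻¹ ≤ (1 - p)⁻¹ - 1 :=
    Real.log_le_sub_one_of_pos (inv_pos.2 (by linarith))
  rw [Real.log_inv] at h1 h2
  have m1 : p * (-Real.log p) ≤ p * (p⁻¹ - 1) :=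
    mul_le_mul_of_nonneg_left (by linarith) hp0.le
  have m2 : (1 - p) * (-Real.log (1 - p)) ≤ (1 - p) * ((1 - p)⁻¹ - 1) :=
    mul_le_mul_of_nonneg_left (by linarith) (by linarith)
  have e1 : p * (p⁻¹ - 1) = 1 - p := by field_simp
  have e2 : (1 - p) * ((1 - p)⁻¹ - 1) = p := by
    have : (1:ℝ) - p ≠ 0 := by linarith
    field_simp
    ring
  nlinarith

lemma ce_decomp {p q : ℝ} (hp : p ∈ Set.Ioo (0:ℝ) 1) (hq : q ∈ Set.Ioo (0:ℝ) 1) :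
    -(p * Real.log q + (1 - p) * Real.log (1 - q))
      = -(p * Real.log p + (1 - p) * Real.log (1 - p))
        + (p * Real.log (p / q) + (1 - p) * Real.log ((1 - p) / (1 - q))) := by
  rw [Real.log_div hp.1.ne' hq.1.ne',
    Real.log_div (by have := hp.2; intro h; nlinarith [h] : (1:ℝ) - p ≠ 0)
      (by have := hq.2; intro h; nlinarith [h] : (1:ℝ) - q ≠ 0)]
  ring

open scoped ENNReal

/-- Conditional-expectation density lemma: for `S = {Y = 1}` and `p ∘ Z` a version of
`E[Y | σ(Z)]`, integrating `g ∘ Z` over `S` is the same as integrating `p·(g∘Z)`. -/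
lemma density_lemma {Ω β : Type*} [MeasurableSpace Ω] [MeasurableSpace β]
    (μ : Measure Ω) [IsProbabilityMeasure μ]
    (Z : Ω → β) (hZ : Measurable Z)
    (Y : Ω → ℝ) (hYm : Measurable Y) (hY01 : ∀ ω, Y ω = 0 ∨ Y ω = 1)
    (p : β → ℝ) (hp : Measurable p) (hp01 : ∀ z, 0 ≤ p z ∧ p z ≤ 1)
    (hcond : (fun ω => p (Z ω)) =ᵐ[μ] μ[Y | MeasurableSpace.comap Z inferInstance])
    (g : β → ℝ≥0∞) (hg : Measurable g) :
    ∫⁻ ω in {ω | Y ω = 1}, g (Z ω) ∂μ = ∫⁻ ω, ENNReal.ofReal (p (Z ω)) * g (Z ω) ∂μ := by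
  have hGle : MeasurableSpace.comap Z inferInstance ≤ _ := hZ.comap_le
  have hS : MeasurableSet {ω | Y ω = 1} := hYm (measurableSet_singleton 1)
  have hYint : Integrable Y μ := by
    refine (integrable_const (1:ℝ)).mono' hYm.aestronglyMeasurable ?_
    exact ae_of_all _ fun ω => by rcases hY01 ω with h | h <;> simp [h]
  have hpZint : Integrable (fun ω => p (Z ω)) μ := by
    refine (integrable_const (1:ℝ)).mono' ((hp.comp hZ).aestronglyMeasurable) ?_
    exact ae_of_all _ fun ω => by
      rw [Real.norm_eq_abs, abs_of_nonneg (hp01 _).1]; exact (hp01 _).2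
  have hpm' : Measurable fun z => ENNReal.ofReal (p z) := ENNReal.measurable_ofReal.comp hp
  have hmeq : Measure.map Z (μ.restrict {ω | Y ω = 1})
      = (Measure.map Z μ).withDensity fun z => ENNReal.ofReal (p z) := by
    ext t ht
    rw [Measure.map_apply hZ ht, Measure.restrict_apply (hZ ht),
      withDensity_apply _ ht, setLIntegral_map ht hpm' hZ]
    have hBG : MeasurableSet[MeasurableSpace.comap Z inferInstance] (Z ⁻¹' t) := ⟨t, ht, rfl⟩
    have e1 : μ (Z ⁻¹' t ∩ {ω | Y ω = 1}) = ∫⁻ ω in Z ⁻¹' t, ENNReal.ofReal (Y ω) ∂μ := by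
      have hpt : ∀ ω, ENNReal.ofReal (Y ω)
          = Set.indicator {ω | Y ω = 1} (fun _ => (1:ℝ≥0∞)) ω := by
        intro ω; rcases hY01 ω with h | h <;> simp [Set.indicator, h]
      calc μ (Z ⁻¹' t ∩ {ω | Y ω = 1})
          = (μ.restrict (Z ⁻¹' t)) {ω | Y ω = 1} := by
            rw [Measure.restrict_apply hS, Set.inter_comm]
        _ = ∫⁻ ω, Set.indicator {ω | Y ω = 1} (fun _ => (1:ℝ≥0∞)) ω ∂(μ.restrict (Z ⁻¹' t)) := by
            rw [lintegral_indicator hS]; simp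
        _ = ∫⁻ ω in Z ⁻¹' t, ENNReal.ofReal (Y ω) ∂μ :=
            lintegral_congr fun ω => (hpt ω).symm
    have e2 : ∫⁻ ω in Z ⁻¹' t, ENNReal.ofReal (Y ω) ∂μ
        = ENNReal.ofReal (∫ ω in Z ⁻¹' t, Y ω ∂μ) :=
      (ofReal_integral_eq_lintegral_ofReal hYint.restrict
        (ae_of_all _ fun ω => by rcases hY01 ω with h | h <;> simp [h])).symm
    have e3 : ∫ ω in Z ⁻¹' t, Y ω ∂μ = ∫ ω in Z ⁻¹' t, p (Z ω) ∂μ := by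
      rw [← setIntegral_condExp hGle hYint hBG]
      exact integral_congr_ae (ae_restrict_of_ae hcond.symm)
    have e4 : ENNReal.ofReal (∫ ω in Z ⁻¹' t, p (Z ω) ∂μ)
        = ∫⁻ ω in Z ⁻¹' t, ENNReal.ofReal (p (Z ω)) ∂μ :=
      ofReal_integral_eq_lintegral_ofReal hpZint.restrict (ae_of_all _ fun ω => (hp01 _).1)
    rw [e1, e2, e3, e4]
  calc ∫⁻ ω in {ω | Y ω = 1}, g (Z ω) ∂μ
      = ∫⁻ z, g z ∂(Measure.map Z (μ.restrict {ω | Y ω = 1})) := (lintegral_map hg hZ).symm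
    _ = ∫⁻ z, g z ∂((Measure.map Z μ).withDensity fun z => ENNReal.ofReal (p z)) := by
        rw [hmeq]
    _ = ∫⁻ z, ENNReal.ofReal (p z) * g z ∂(Measure.map Z μ) := by
        rw [lintegral_withDensity_eq_lintegral_mul _ hpm' hg]; rfl
    _ = ∫⁻ ω, ENNReal.ofReal (p (Z ω)) * g (Z ω) ∂μ := lintegral_map (hpm'.mul hg) hZ

end Aux

open scoped ENNReal

/-- The main computation, abstracted: if `p ∘ Z` is a version of `E[Y | σ(Z)]`, `Y ∈ {0,1}`,
`p, q` take values in `(0,1)` and the pointwise KL is a.e. bounded, then the excess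
cross-entropy risk of `q ∘ Z` over `p ∘ Z` equals the expected KL divergence. -/
lemma excess_risk_aux {Ω β : Type*} [MeasurableSpace Ω] [MeasurableSpace β]
    (μ : Measure Ω) [IsProbabilityMeasure μ]
    (Z : Ω → β) (hZ : Measurable Z)
    (Y : Ω → ℝ) (hYm : Measurable Y) (hY01 : ∀ ω, Y ω = 0 ∨ Y ω = 1)
    (p q : β → ℝ) (hpm : Measurable p) (hqm : Measurable q)
    (hp01 : ∀ z, p z ∈ Set.Ioo (0:ℝ) 1) (hq01 : ∀ z, q z ∈ Set.Ioo (0:ℝ) 1)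
    (hcond : (fun ω => p (Z ω)) =ᵐ[μ] μ[Y | MeasurableSpace.comap Z inferInstance])
    (C : ℝ)
    (hC : ∀ᵐ ω ∂μ, p (Z ω) * Real.log (p (Z ω) / q (Z ω))
        + (1 - p (Z ω)) * Real.log ((1 - p (Z ω)) / (1 - q (Z ω))) ≤ C) :
    ∫ ω, -(Y ω * Real.log (q (Z ω)) + (1 - Y ω) * Real.log (1 - q (Z ω))) ∂μ
      - ∫ ω, -(Y ω * Real.log (p (Z ω)) + (1 - Y ω) * Real.log (1 - p (Z ω))) ∂μ
    = ∫ ω, (p (Z ω) * Real.log (p (Z ω) / q (Z ω))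
        + (1 - p (Z ω)) * Real.log ((1 - p (Z ω)) / (1 - q (Z ω)))) ∂μ := by
  have hGle : MeasurableSpace.comap Z inferInstance ≤ _ := hZ.comap_le
  have hYint : Integrable Y μ := by
    refine (integrable_const (1:ℝ)).mono' hYm.aestronglyMeasurable ?_
    exact ae_of_all _ fun ω => by rcases hY01 ω with h | h <;> simp [h]
  -- the complement conditional expectation
  have hY01' : ∀ ω, (1 - Y ω) = 0 ∨ (1 - Y ω) = 1 := fun ω => by
    rcases hY01 ω with h | h
    · right; rw [h]; ring
    · left; rw [h]; ring
  have hcond' : (fun ω => 1 - p (Z ω)) =ᵐ[μ]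
      μ[(fun ω => 1 - Y ω) | MeasurableSpace.comap Z inferInstance] := by
    have h1 : μ[((fun _ => (1:ℝ)) - Y) | MeasurableSpace.comap Z inferInstance] =ᵐ[μ]
        μ[(fun _ => (1:ℝ)) | MeasurableSpace.comap Z inferInstance]
          - μ[Y | MeasurableSpace.comap Z inferInstance] :=
      condExp_sub (integrable_const 1) hYint _
    have h2 : μ[(fun _ => (1:ℝ)) | MeasurableSpace.comap Z inferInstance] = fun _ => (1:ℝ) :=
      condExp_const hGle 1
    have h3 : ((fun _ => (1:ℝ)) - Y) = fun ω => 1 - Y ω := rfl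
    rw [h3, h2] at h1
    filter_upwards [h1, hcond] with ω e1 e2
    rw [e1]
    simp only [Pi.sub_apply]
    rw [← e2]
  -- key generic computation: replacing Y by p in the cross-entropy against any f
  have gen : ∀ (f : β → ℝ), Measurable f → (∀ z, f z ∈ Set.Ioo (0:ℝ) 1) →
      ∫⁻ ω, ENNReal.ofReal (-(Y ω * Real.log (f (Z ω)) + (1 - Y ω) * Real.log (1 - f (Z ω)))) ∂μ
      = ∫⁻ ω, ENNReal.ofReal
          (-(p (Z ω) * Real.log (f (Z ω)) + (1 - p (Z ω)) * Real.log (1 - f (Z ω)))) ∂μ := by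
    intro f hfm hf01
    have hlog1 : ∀ z, 0 ≤ -Real.log (f z) := fun z =>
      neg_nonneg.2 (Real.log_neg (hf01 z).1 (hf01 z).2).le
    have hlog2 : ∀ z, 0 ≤ -Real.log (1 - f z) := fun z =>
      neg_nonneg.2 (Real.log_neg (by linarith [(hf01 z).2]) (by linarith [(hf01 z).1])).le
    have hm1 : Measurable fun z => ENNReal.ofReal (-Real.log (f z)) :=
      ENNReal.measurable_ofReal.comp (Real.measurable_log.comp hfm).neg
    have hm2 : Measurable fun z => ENNReal.ofReal (-Real.log (1 - f z)) :=
      ENNReal.measurable_ofReal.comp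
        (Real.measurable_log.comp (measurable_const.sub hfm)).neg
    have hS1 : MeasurableSet {ω | Y ω = 1} := hYm (measurableSet_singleton 1)
    have hS0 : MeasurableSet {ω | (1:ℝ) - Y ω = 1} :=
      (measurable_const.sub hYm) (measurableSet_singleton 1)
    have split : ∀ ω,
        ENNReal.ofReal (-(Y ω * Real.log (f (Z ω)) + (1 - Y ω) * Real.log (1 - f (Z ω))))
        = Set.indicator {ω | Y ω = 1} (fun ω => ENNReal.ofReal (-Real.log (f (Z ω)))) ω
          + Set.indicator {ω | (1:ℝ) - Y ω = 1}
              (fun ω => ENNReal.ofReal (-Real.log (1 - f (Z ω)))) ω := by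
      intro ω
      rcases hY01 ω with h | h <;>
        simp [Set.indicator, h] <;> norm_num
    rw [lintegral_congr split, lintegral_add_left (by
      exact ((hm1.comp hZ).indicator hS1))]
    rw [lintegral_indicator hS1, lintegral_indicator hS0]
    have d1 := density_lemma μ Z hZ Y hYm hY01 p hpm
      (fun z => ⟨(hp01 z).1.le, (hp01 z).2.le⟩) hcond
      (fun z => ENNReal.ofReal (-Real.log (f z))) hm1
    have d2 := density_lemma μ Z hZ (fun ω => 1 - Y ω) (measurable_const.sub hYm) hY01'
      (fun z => 1 - p z) (measurable_const.sub hpm)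
      (fun z => ⟨by show (0:ℝ) ≤ 1 - p z; linarith [(hp01 z).2],
        by show (1:ℝ) - p z ≤ 1; linarith [(hp01 z).1]⟩) hcond'
      (fun z => ENNReal.ofReal (-Real.log (1 - f z))) hm2
    rw [d1, d2, ← lintegral_add_left (by
      exact (ENNReal.measurable_ofReal.comp (hpm.comp hZ)).mul (hm1.comp hZ))]
    refine lintegral_congr fun ω => ?_
    rw [← ENNReal.ofReal_mul (hp01 (Z ω)).1.le,
      ← ENNReal.ofReal_mul (by linarith [(hp01 (Z ω)).2] : (0:ℝ) ≤ 1 - p (Z ω)),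
      ← ENNReal.ofReal_add (mul_nonneg (hp01 (Z ω)).1.le (hlog1 (Z ω)))
        (mul_nonneg (by linarith [(hp01 (Z ω)).2]) (hlog2 (Z ω)))]
    congr 1
    ring
  -- notation for the three lintegrals
  set L2 : ℝ≥0∞ := ∫⁻ ω, ENNReal.ofReal
      (-(p (Z ω) * Real.log (p (Z ω)) + (1 - p (Z ω)) * Real.log (1 - p (Z ω)))) ∂μ with hL2def
  set Lr : ℝ≥0∞ := ∫⁻ ω, ENNReal.ofReal
      (p (Z ω) * Real.log (p (Z ω) / q (Z ω))
        + (1 - p (Z ω)) * Real.log ((1 - p (Z ω)) / (1 - q (Z ω)))) ∂μ with hLrdef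
  have hdecomp : ∀ ω, ENNReal.ofReal
      (-(p (Z ω) * Real.log (q (Z ω)) + (1 - p (Z ω)) * Real.log (1 - q (Z ω))))
      = ENNReal.ofReal
          (-(p (Z ω) * Real.log (p (Z ω)) + (1 - p (Z ω)) * Real.log (1 - p (Z ω))))
        + ENNReal.ofReal
          (p (Z ω) * Real.log (p (Z ω) / q (Z ω))
            + (1 - p (Z ω)) * Real.log ((1 - p (Z ω)) / (1 - q (Z ω)))) := by
    intro ω
    rw [← ENNReal.ofReal_add (ent_nonneg (hp01 (Z ω))) (kl_nonneg (hp01 (Z ω)) (hq01 (Z ω)))]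
    exact congrArg _ (ce_decomp (hp01 (Z ω)) (hq01 (Z ω)))
  have hmg2 : Measurable fun ω => ENNReal.ofReal
      (-(p (Z ω) * Real.log (p (Z ω)) + (1 - p (Z ω)) * Real.log (1 - p (Z ω)))) := by
    have hpz : Measurable fun ω => p (Z ω) := hpm.comp hZ
    exact ENNReal.measurable_ofReal.comp
      (((hpz.mul (Real.measurable_log.comp hpz)).add
        ((measurable_const.sub hpz).mul
          (Real.measurable_log.comp (measurable_const.sub hpz)))).neg)
  have hL1 : ∫⁻ ω, ENNReal.ofReal
      (-(p (Z ω) * Real.log (q (Z ω)) + (1 - p (Z ω)) * Real.log (1 - q (Z ω)))) ∂μ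
      = L2 + Lr := by
    rw [lintegral_congr hdecomp, lintegral_add_left hmg2]
  have hL2top : L2 ≠ ⊤ := by
    have hle : L2 ≤ ∫⁻ _, (1:ℝ≥0∞) ∂μ := by
      refine lintegral_mono fun ω => ?_
      rw [← ENNReal.ofReal_one]
      exact ENNReal.ofReal_le_ofReal (ent_le_one (hp01 (Z ω)))
    rw [lintegral_one, measure_univ] at hle
    exact (lt_of_le_of_lt hle ENNReal.one_lt_top).ne
  have hLrtop : Lr ≠ ⊤ := by
    have hle : Lr ≤ ∫⁻ _, ENNReal.ofReal C ∂μ := by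
      refine lintegral_mono_ae (hC.mono fun ω h => ENNReal.ofReal_le_ofReal h)
    rw [lintegral_const, measure_univ, mul_one] at hle
    exact (lt_of_le_of_lt hle ENNReal.ofReal_lt_top).ne
  -- Bochner conversions
  have hnn1 : ∀ (f : β → ℝ), (∀ z, f z ∈ Set.Ioo (0:ℝ) 1) → ∀ ω,
      0 ≤ -(Y ω * Real.log (f (Z ω)) + (1 - Y ω) * Real.log (1 - f (Z ω))) := by
    intro f hf01 ω
    have h1 : Real.log (f (Z ω)) ≤ 0 := (Real.log_neg (hf01 _).1 (hf01 _).2).le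
    have h2 : Real.log (1 - f (Z ω)) ≤ 0 :=
      (Real.log_neg (by linarith [(hf01 (Z ω)).2]) (by linarith [(hf01 (Z ω)).1])).le
    rcases hY01 ω with h | h <;> rw [h] <;> nlinarith
  have hmf : ∀ (f : β → ℝ), Measurable f → Measurable fun ω =>
      -(Y ω * Real.log (f (Z ω)) + (1 - Y ω) * Real.log (1 - f (Z ω))) := by
    intro f hfm
    have hfz : Measurable fun ω => f (Z ω) := hfm.comp hZ
    exact ((hYm.mul (Real.measurable_log.comp hfz)).add
      ((measurable_const.sub hYm).mul
        (Real.measurable_log.comp (measurable_const.sub hfz)))).neg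
  have i1 : ∫ ω, -(Y ω * Real.log (q (Z ω)) + (1 - Y ω) * Real.log (1 - q (Z ω))) ∂μ
      = (L2 + Lr).toReal := by
    rw [integral_eq_lintegral_of_nonneg_ae (ae_of_all _ (hnn1 q hq01))
      (hmf q hqm).aestronglyMeasurable, gen q hqm hq01, hL1]
  have i2 : ∫ ω, -(Y ω * Real.log (p (Z ω)) + (1 - Y ω) * Real.log (1 - p (Z ω))) ∂μ
      = L2.toReal := by
    rw [integral_eq_lintegral_of_nonneg_ae (ae_of_all _ (hnn1 p hp01))
      (hmf p hpm).aestronglyMeasurable, gen p hpm hp01, hL2def]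
  have ir : ∫ ω, (p (Z ω) * Real.log (p (Z ω) / q (Z ω))
      + (1 - p (Z ω)) * Real.log ((1 - p (Z ω)) / (1 - q (Z ω)))) ∂μ = Lr.toReal := by
    have hmr : Measurable fun ω => p (Z ω) * Real.log (p (Z ω) / q (Z ω))
        + (1 - p (Z ω)) * Real.log ((1 - p (Z ω)) / (1 - q (Z ω))) := by
      have hpz : Measurable fun ω => p (Z ω) := hpm.comp hZ
      have hqz : Measurable fun ω => q (Z ω) := hqm.comp hZ
      exact (hpz.mul (Real.measurable_log.comp (hpz.div hqz))).add
        ((measurable_const.sub hpz).mul (Real.measurable_log.comp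
          ((measurable_const.sub hpz).div (measurable_const.sub hqz))))
    rw [integral_eq_lintegral_of_nonneg_ae
      (ae_of_all _ fun ω => kl_nonneg (hp01 (Z ω)) (hq01 (Z ω)))
      hmr.aestronglyMeasurable, hLrdef]
  rw [i1, i2, ir, ENNReal.toReal_add hL2top hLrtop]
  ring

/-- Excess cross-entropy risk of the optimal counterfactually fair classifier: under the
invertible structural model with `A ⊥ U` and binary `Y`,
`E[ℓ_CE(φ_CF(X,A), Y)] - E[ℓ_CE(φ*(X,A), Y)] = I(A; Y | U)`, where the conditional mutual
information is `I(A; Y | U) = E_{U,A}[KL(Bernoulli(φ*) ‖ Bernoulli(p(Y=1|U)))]` and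
`p(Y=1|U) = π·φ*(x_1,1) + (1-π)·φ*(x_0,0)` is exactly the fair mixture `φ_CF`. -/
theorem excess_cross_entropy_risk_eq_conditional_mutual_information
    {Ω : Type*} [MeasurableSpace Ω] (μ : Measure Ω) [IsProbabilityMeasure μ]
    {k d : ℕ}
    (U : Ω → EuclideanSpace ℝ (Fin k)) (A : Ω → Bool)
    (hU : Measurable U) (hA : Measurable A)
    (hInd : ProbabilityTheory.IndepFun U A μ)
    (F : EuclideanSpace ℝ (Fin k) → Bool → EuclideanSpace ℝ (Fin d))
    (hFbij : ∀ a, Function.Bijective (F · a))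
    (hFmeas : ∀ a, Measurable (F · a))
    (X : Ω → EuclideanSpace ℝ (Fin d)) (hX : ∀ ω, X ω = F (U ω) (A ω))
    (Y : Ω → ℝ) (hYm : Measurable Y) (hY01 : ∀ ω, Y ω = 0 ∨ Y ω = 1)
    (φstar : EuclideanSpace ℝ (Fin d) → Bool → ℝ) (hφm : ∀ a, Measurable (φstar · a))
    (hφ01 : ∀ x a, φstar x a ∈ Set.Ioo (0 : ℝ) 1)
    (hcond : (fun ω => φstar (X ω) (A ω)) =ᵐ[μ]
      μ[Y | MeasurableSpace.comap (fun ω => (X ω, A ω)) inferInstance])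
    (φCF : Ω → ℝ)
    (hφCF : ∀ ω, φCF ω = (μ {ω' | A ω' = A ω}).toReal * φstar (X ω) (A ω)
        + (μ {ω' | A ω' = !(A ω)}).toReal * φstar (F (U ω) (!(A ω))) (!(A ω))) :
    ∫ ω, -(Y ω * Real.log (φCF ω) + (1 - Y ω) * Real.log (1 - φCF ω)) ∂μ
      - ∫ ω, -(Y ω * Real.log (φstar (X ω) (A ω))
            + (1 - Y ω) * Real.log (1 - φstar (X ω) (A ω))) ∂μ
    = ∫ ω, (φstar (X ω) (A ω) * Real.log (φstar (X ω) (A ω) / φCF ω)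
        + (1 - φstar (X ω) (A ω)) * Real.log ((1 - φstar (X ω) (A ω)) / (1 - φCF ω))) ∂μ := by
  classical
  -- measurability of X and Z
  have hXm : Measurable X := by
    have hF : Measurable fun z : EuclideanSpace ℝ (Fin k) × Bool => F z.1 z.2 :=
      measurable_from_prod_countable_left fun a => hFmeas a
    have : Measurable fun ω => F (U ω) (A ω) := hF.comp (hU.prodMk hA)
    rwa [show X = fun ω => F (U ω) (A ω) from funext hX]
  have hZ : Measurable fun ω => (X ω, A ω) := hXm.prodMk hA
  -- the weights
  have hπ_nonneg : ∀ a : Bool, 0 ≤ (μ {ω' | A ω' = a}).toReal := fun _ => ENNReal.toReal_nonneg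
  have hπ_sum : ∀ a : Bool, (μ {ω' | A ω' = a}).toReal + (μ {ω' | A ω' = !a}).toReal = 1 := by
    intro a
    have hma : MeasurableSet {ω' | A ω' = a} := hA (measurableSet_singleton a)
    have hmb : MeasurableSet {ω' | A ω' = !a} := hA (measurableSet_singleton (!a))
    have hdis : Disjoint {ω' | A ω' = a} {ω' | A ω' = !a} := by
      rw [Set.disjoint_left]
      intro ω h1 h2
      simp only [Set.mem_setOf_eq] at h1 h2
      rw [h1] at h2
      cases a <;> simp at h2
    have hun : {ω' | A ω' = a} ∪ {ω' | A ω' = !a} = Set.univ := by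
      ext ω
      simp only [Set.mem_union, Set.mem_setOf_eq, Set.mem_univ, iff_true]
      cases ha : A ω <;> cases a <;> simp
    have hsum : μ {ω' | A ω' = a} + μ {ω' | A ω' = !a} = 1 := by
      rw [← measure_union hdis hmb, hun, measure_univ]
    calc (μ {ω' | A ω' = a}).toReal + (μ {ω' | A ω' = !a}).toReal
        = (μ {ω' | A ω' = a} + μ {ω' | A ω' = !a}).toReal :=
          (ENNReal.toReal_add (measure_ne_top _ _) (measure_ne_top _ _)).symm
      _ = (1:ℝ≥0∞).toReal := by rw [hsum]
      _ = 1 := ENNReal.toReal_one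
  -- the measurable inverse of F(·, a)
  set Finv : Bool → EuclideanSpace ℝ (Fin d) → EuclideanSpace ℝ (Fin k) :=
    fun a => Function.invFun (F · a) with hFinvdef
  have hFinv_left : ∀ a u, Finv a (F u a) = u := fun a u =>
    Function.leftInverse_invFun (hFbij a).1 u
  have hFinv_meas : ∀ a, Measurable (Finv a) := by
    intro a
    have hemb : MeasurableEmbedding (F · a) := (hFmeas a).measurableEmbedding (hFbij a).1
    intro s hs
    have himg : Finv a ⁻¹' s = (F · a) '' s := by
      ext x
      simp only [Set.mem_preimage, Set.mem_image]
      constructor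
      · intro h
        exact ⟨Finv a x, h, Function.rightInverse_invFun (hFbij a).2 x⟩
      · rintro ⟨u, hu, rfl⟩
        rwa [hFinv_left]
    rw [himg]
    exact hemb.measurableSet_image.2 hs
  -- the fair-mixture function on the (X, A) space
  set hfun : EuclideanSpace ℝ (Fin d) × Bool → ℝ := fun z =>
    (μ {ω' | A ω' = z.2}).toReal * φstar z.1 z.2
      + (μ {ω' | A ω' = !z.2}).toReal * φstar (F (Finv z.2 z.1) (!z.2)) (!z.2) with hhdef
  have hhm : Measurable hfun := by
    refine measurable_from_prod_countable_left fun a => ?_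
    simp only [hhdef]
    exact (measurable_const.mul (hφm a)).add
      (measurable_const.mul ((hφm (!a)).comp' ((hFmeas (!a)).comp' (hFinv_meas a))))
  have hq_eq : ∀ ω, φCF ω = hfun (X ω, A ω) := by
    intro ω
    rw [hφCF ω, hhdef]
    simp only
    rw [hX ω, hFinv_left]
  have hq01 : ∀ z, hfun z ∈ Set.Ioo (0:ℝ) 1 := by
    intro z
    exact convex_mem_Ioo (hπ_nonneg z.2) (hπ_nonneg (!z.2)) (hπ_sum z.2)
      (hφ01 z.1 z.2) (hφ01 _ (!z.2))
  -- measurability of p on the product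
  have hpzm : Measurable fun z : EuclideanSpace ℝ (Fin d) × Bool => φstar z.1 z.2 :=
    measurable_from_prod_countable_left fun a => hφm a
  -- a.e. bound on the KL term
  have hπ_pos_ae : ∀ᵐ ω ∂μ, 0 < (μ {ω' | A ω' = A ω}).toReal := by
    rw [ae_iff]
    have hnull : ∀ a : Bool, μ {ω | A ω = a ∧ (μ {ω' | A ω' = a}).toReal = 0} = 0 := by
      intro a
      by_cases h : (μ {ω' | A ω' = a}).toReal = 0
      · have hzero : μ {ω' | A ω' = a} = 0 := by
          rcases (ENNReal.toReal_eq_zero_iff _).1 h with h' | h'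
          · exact h'
          · exact absurd h' (measure_ne_top _ _)
        refine measure_mono_null (fun ω hω => ?_) hzero
        exact hω.1
      · have : {ω | A ω = a ∧ (μ {ω' | A ω' = a}).toReal = 0} = ∅ := by
          ext ω; simp [h]
        rw [this, measure_empty]
    refine measure_mono_null (fun ω hω => ?_)
      (measure_union_null (hnull true) (hnull false))
    simp only [Set.mem_setOf_eq, not_lt] at hω
    have heq : (μ {ω' | A ω' = A ω}).toReal = 0 :=
      le_antisymm hω (hπ_nonneg (A ω))
    cases ha : A ω
    · right; exact ⟨ha, by rwa [ha] at heq⟩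
    · left; exact ⟨ha, by rwa [ha] at heq⟩
  set C : ℝ := max (-Real.log ((μ {ω' | A ω' = true}).toReal))
      (-Real.log ((μ {ω' | A ω' = false}).toReal)) with hCdef
  have hC : ∀ᵐ ω ∂μ,
      φstar (X ω) (A ω) * Real.log (φstar (X ω) (A ω) / hfun (X ω, A ω))
        + (1 - φstar (X ω) (A ω))
          * Real.log ((1 - φstar (X ω) (A ω)) / (1 - hfun (X ω, A ω))) ≤ C := by
    filter_upwards [hπ_pos_ae] with ω hpos
    set c : ℝ := (μ {ω' | A ω' = A ω}).toReal with hcdef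
    have h1 : c * φstar (X ω) (A ω) ≤ hfun (X ω, A ω) := by
      rw [hhdef]
      simp only
      have := mul_nonneg (hπ_nonneg (!(A ω)))
        (hφ01 (F (Finv (A ω) (X ω)) (!(A ω))) (!(A ω))).1.le
      linarith
    have h2 : c * (1 - φstar (X ω) (A ω)) ≤ 1 - hfun (X ω, A ω) := by
      rw [hhdef]
      simp only
      have hs := hπ_sum (A ω)
      have hp2 := (hφ01 (F (Finv (A ω) (X ω)) (!(A ω))) (!(A ω))).2
      have := mul_nonneg (hπ_nonneg (!(A ω)))
        (by linarith : (0:ℝ) ≤ 1 - φstar (F (Finv (A ω) (X ω)) (!(A ω))) (!(A ω)))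
      nlinarith
    have hkl := kl_le (hφ01 (X ω) (A ω)) (hq01 (X ω, A ω)) hpos h1 h2
    refine le_trans hkl ?_
    rw [hCdef]
    cases ha : A ω
    · rw [hcdef, ha]; exact le_max_right _ _
    · rw [hcdef, ha]; exact le_max_left _ _
  -- apply the abstract lemma
  have := excess_risk_aux μ (fun ω => (X ω, A ω)) hZ Y hYm hY01
    (fun z => φstar z.1 z.2) hfun hpzm hhm (fun z => hφ01 z.1 z.2) hq01 hcond C hC
  simp only [hq_eq]
  exact this
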